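/- Let T be an increasing shifted tableau whose largest first-row entry satisfies T_{(1,λ₁)} < a, and let a < b < c with row(T)·acb an FPF-involution word. Then T ← acb = T ← cab: both insertions append a and b to the end of the first row and insert c into the second row. -/

import Mathlib

/-- The function underlying the permutation `Θ = (12)(34)(56)⋯` on positive integers
(fixing `0`). -/
def thetaFun (n : ℕ) : ℕ :=
  if n = 0 then 0 else if n % 2 = 1 then n + 1 else n - 1

lemma thetaFun_involutive : Function.Involutive thetaFun := by
  intro n
  by_cases h0 : n = 0
  · simp [thetaFun, h0]
  · by_cases h1 : n % 2 = 1
    · have e1 : thetaFun n = n + 1 := by simp [thetaFun, h0, h1]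
      have h2 : ¬ ((n + 1) % 2 = 1) := by omega
      have h3 : ¬ (n + 1 = 0) := by omega
      rw [e1]
      simp only [thetaFun, if_neg h3, if_neg h2]
      omega
    · have e1 : thetaFun n = n - 1 := by simp [thetaFun, h0, h1]
      have h2 : (n - 1) % 2 = 1 := by omega
      have h3 : ¬ (n - 1 = 0) := by omega
      rw [e1]
      simp only [thetaFun, if_neg h3, if_pos h2]
      omega

/-- The fixed-point-free involution `Θ = (12)(34)(56)⋯`. -/
def theta : Equiv.Perm ℕ := Function.Involutive.toPerm thetaFun thetaFun_involutive

/-- The simple transposition `s_i = (i, i+1)`. -/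
def sPerm (i : ℕ) : Equiv.Perm ℕ := Equiv.swap i (i + 1)

/-- For a word `w = i₁i₂⋯i_l`, the permutation `s_{i_l}⋯s_{i₁} Θ s_{i₁}⋯s_{i_l}`. -/
def heckeConj (w : List ℕ) : Equiv.Perm ℕ :=
  ((w.map sPerm).reverse).prod * theta * (w.map sPerm).prod

/-- `w` is a symplectic Hecke word for `z`, i.e. a word of positive letters with
`z = s_{i_l}⋯s_{i₁} Θ s_{i₁}⋯s_{i_l}`. -/
def SympHecke (z : Equiv.Perm ℕ) (w : List ℕ) : Prop :=
  (∀ i ∈ w, 1 ≤ i) ∧ z = heckeConj w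

/-- `z` belongs to `F_∞`, the conjugacy set `{π⁻¹ Θ π : π ∈ S_∞}`. -/
def InFinf (z : Equiv.Perm ℕ) : Prop := ∃ w : List ℕ, SympHecke z w

/-- `w` is an FPF-involution word for `z`: a symplectic Hecke word for `z` of minimal
length among all symplectic Hecke words for `z`. -/
def IsFPFWordFor (z : Equiv.Perm ℕ) (w : List ℕ) : Prop :=
  SympHecke z w ∧ ∀ w' : List ℕ, SympHecke z w' → w.length ≤ w'.length

/-- `w` is an FPF-involution word (for the element it determines). -/
def IsFPFWord (w : List ℕ) : Prop := IsFPFWordFor (heckeConj w) w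
/-- A shifted tableau, given as its list of rows (top to bottom); row `i` (0-indexed)
implicitly occupies absolute columns `i, i+1, …`. -/
abbrev Tab := List (List ℕ)

/-- Replace row `i` of `T` by `r`, creating a new row if `i = T.length`. -/
def updRow (T : Tab) (i : ℕ) (r : List ℕ) : Tab :=
  if i < T.length then T.set i r else T ++ [r]

/-- The entries of absolute column `c` of `T`, from top to bottom. -/
def colList (T : Tab) (c : ℕ) : List ℕ :=
  (List.range (c + 1)).filterMap (fun i => (T[i]?).bind (fun r => r[c - i]?))

mutual
/-- `InsRow T i a T' pos pr`: the row-insertion phase of FPF-involution Coxeter-Knuth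
insertion, inserting the letter `a` into row `i` of `T`, eventually producing the
tableau `T'` with new box at position `pos` (row, absolute column), `pr = true` iff the
insertion terminated with a column insertion. -/
inductive InsRow : Tab → ℕ → ℕ → Tab → ℕ × ℕ → Bool → Prop
  | append (T : Tab) (i a : ℕ) (r : List ℕ) :
      r = T.getD i [] →
      r.dropWhile (fun x => decide (x < a)) = [] →
      InsRow T i a (updRow T i (r ++ [a])) (i, i + r.length) false
  | equal (T : Tab) (i a : ℕ) (rest : List ℕ) (T' : Tab) (pos : ℕ × ℕ) (pr : Bool) :
      (T.getD i []).dropWhile (fun x => decide (x < a)) = a :: rest →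
      InsRow T (i+1) (a+1) T' pos pr →
      InsRow T i a T' pos pr
  | parity (T : Tab) (i a b : ℕ) (rest : List ℕ) (T' : Tab) (pos : ℕ × ℕ) (pr : Bool) :
      (T.getD i []).takeWhile (fun x => decide (x < a)) = [] →
      (T.getD i []).dropWhile (fun x => decide (x < a)) = b :: rest →
      a < b → a % 2 ≠ b % 2 →
      InsCol T (i+1) (a+2) T' pos pr →
      InsRow T i a T' pos pr
  | bumpRow (T : Tab) (i a b : ℕ) (pre rest : List ℕ) (T' : Tab) (pos : ℕ × ℕ) (pr : Bool) :
      pre = (T.getD i []).takeWhile (fun x => decide (x < a)) →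
      (T.getD i []).dropWhile (fun x => decide (x < a)) = b :: rest →
      a < b → pre ≠ [] →
      InsRow (T.set i (pre ++ a :: rest)) (i+1) b T' pos pr →
      InsRow T i a T' pos pr
  | bumpDiag (T : Tab) (i a b : ℕ) (rest : List ℕ) (T' : Tab) (pos : ℕ × ℕ) (pr : Bool) :
      (T.getD i []).takeWhile (fun x => decide (x < a)) = [] →
      (T.getD i []).dropWhile (fun x => decide (x < a)) = b :: rest →
      a < b → a % 2 = b % 2 →
      InsCol (T.set i (a :: rest)) (i+1) b T' pos pr →
      InsRow T i a T' pos pr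

/-- `InsCol T c x T' pos pr`: the column-insertion phase, inserting `x` into the
absolute column `c` of `T`. -/
inductive InsCol : Tab → ℕ → ℕ → Tab → ℕ × ℕ → Bool → Prop
  | append (T : Tab) (c x k : ℕ) :
      (colList T c).dropWhile (fun y => decide (y < x)) = [] →
      k = (colList T c).length →
      (T.getD k []).length = c - k →
      k ≤ c →
      InsCol T c x (updRow T k ((T.getD k []) ++ [x])) (k, c) true
  | equal (T : Tab) (c x : ℕ) (rest : List ℕ) (T' : Tab) (pos : ℕ × ℕ) (pr : Bool) :
      (colList T c).dropWhile (fun y => decide (y < x)) = x :: rest →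
      InsCol T (c+1) (x+1) T' pos pr →
      InsCol T c x T' pos pr
  | bump (T : Tab) (c x b k : ℕ) (rest : List ℕ) (T' : Tab) (pos : ℕ × ℕ) (pr : Bool) :
      (colList T c).dropWhile (fun y => decide (y < x)) = b :: rest →
      x < b →
      k = ((colList T c).takeWhile (fun y => decide (y < x))).length →
      InsCol (T.set k ((T.getD k []).set (c - k) x)) (c+1) b T' pos pr →
      InsCol T c x T' pos pr
end

/-- Insertion of a word, letter by letter, each letter starting at the first row.
`InsWord T w T'` means `T ← w = T'`. -/
inductive InsWord : Tab → List ℕ → Tab → Prop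
  | nil (T : Tab) : InsWord T [] T
  | cons (T T₁ T₂ : Tab) (a : ℕ) (w : List ℕ) (pos : ℕ × ℕ) (pr : Bool) :
      InsRow T 0 a T₁ pos pr → InsWord T₁ w T₂ → InsWord T (a :: w) T₂

/-- A recording tableau: each box carries a label together with a primed flag. -/
abbrev RTab := List (List (ℕ × Bool))

/-- Replace row `i` of a recording tableau, creating a new row if needed. -/
def updRowR (Q : RTab) (i : ℕ) (r : List (ℕ × Bool)) : RTab :=
  if i < Q.length then Q.set i r else Q ++ [r]

/-- `InsWordRec T Q k w T' Q'`: insertion of the word `w` starting from the pair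
`(T, Q)` with next label `k`, recording label `k` (primed iff the insertion of the
letter terminated with a column insertion) in the new box. -/
inductive InsWordRec : Tab → RTab → ℕ → List ℕ → Tab → RTab → Prop
  | nil (T : Tab) (Q : RTab) (k : ℕ) : InsWordRec T Q k [] T Q
  | cons (T T₁ T₂ : Tab) (Q Q₂ : RTab) (k a i j : ℕ) (w : List ℕ) (pr : Bool) :
      InsRow T 0 a T₁ (i, j) pr →
      InsWordRec T₁ (updRowR Q i ((Q.getD i []) ++ [(k, pr)])) (k+1) w T₂ Q₂ →
      InsWordRec T Q k (a :: w) T₂ Q₂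

/-- `T` is an increasing shifted tableau (with positive entries). -/
def IsIncreasingTab (T : Tab) : Prop :=
  (∀ r ∈ T, r ≠ []) ∧
  List.Chain' (fun r s : List ℕ => s.length < r.length) T ∧
  (∀ r ∈ T, List.Chain' (· < ·) r) ∧
  (∀ r ∈ T, ∀ x ∈ r, 1 ≤ x) ∧
  (∀ i k x y, (T.getD (i+1) [])[k]? = some x →
      (T.getD i [])[k+1]? = some y → y < x)

/-- The row reading word of `T`: rows from bottom to top, each left to right. -/
def rowWord (T : Tab) : List ℕ := T.reverse.flatten

section AuxFRS
open List

private lemma get?_some_of_lt {α : Type*} {l : List α} {n : ℕ} (h : n < l.length) :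
    ∃ v, l[n]? = some v := by
  rw [List.getElem?_eq_getElem h]; exact ⟨_, rfl⟩

private lemma getD_eq_of_get? {α : Type*} {l : List α} {n : ℕ} {d r : α} (h : l[n]? = some r) :
    l.getD n d = r := by rw [List.getD_eq_getElem?_getD, h]; rfl

private lemma getD_eq_nil_of_le {α : Type*} {l : List α} {n : ℕ} {d : α} (h : l.length ≤ n) :
    l.getD n d = d := by rw [List.getD_eq_getElem?_getD, List.getElem?_eq_none_iff.mpr h]; rfl

private lemma getDL_some_of_lt {α : Type*} {l : List α} {n : ℕ} {d : α} (h : n < l.length) :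
    l[n]? = some (l.getD n d) := by
  obtain ⟨r, hr⟩ : ∃ r, l[n]? = some r := by rw [List.getElem?_eq_getElem h]; exact ⟨_, rfl⟩
  rw [hr, getD_eq_of_get? hr]

private lemma get?_set_self' {α : Type*} (l : List α) (n : ℕ) (a : α) (h : n < l.length) :
    (l.set n a)[n]? = some a := by
  rw [List.getElem?_set_self (by simpa using h)]

private lemma takeWhile_app_all (p : ℕ → Bool) (l1 l2 : List ℕ) (h : ∀ x ∈ l1, p x = true) :
    (l1 ++ l2).takeWhile p = l1 ++ l2.takeWhile p := by
  induction l1 with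
  | nil => simp
  | cons a l ih =>
    have ha := h a (by simp)
    simp only [List.cons_append, List.takeWhile_cons, ha, if_true]
    rw [ih (fun x hx => h x (by simp [hx]))]

private lemma dropWhile_app_all (p : ℕ → Bool) (l1 l2 : List ℕ) (h : ∀ x ∈ l1, p x = true) :
    (l1 ++ l2).dropWhile p = l2.dropWhile p := by
  induction l1 with
  | nil => simp
  | cons a l ih =>
    have ha := h a (by simp)
    simp only [List.cons_append, List.dropWhile_cons, ha, if_true]
    exact ih (fun x hx => h x (by simp [hx]))

private lemma dropWhile_head_false {p : ℕ → Bool} : ∀ {l : List ℕ} {b : ℕ} {t : List ℕ},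
    l.dropWhile p = b :: t → p b = false := by
  intro l
  induction l with
  | nil => intro b t h; simp at h
  | cons a l ih =>
    intro b t h
    rw [List.dropWhile_cons] at h
    by_cases hp : p a = true
    · rw [if_pos hp] at h; exact ih h
    · rw [if_neg hp] at h
      injection h with h1 _
      subst h1
      simpa using hp

private lemma chain'_gt_get? {l : List ℕ} (h : List.Chain' (· > ·) l) :
    ∀ (d p : ℕ) {u v : ℕ}, l[p]? = some u → l[p + d]? = some v → v + d ≤ u := by
  intro d
  induction d with
  | zero =>
    intro p u v h1 h2
    rw [Nat.add_zero, h1] at h2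
    injection h2 with h2
    omega
  | succ d ih =>
    intro p u v h1 h2
    rw [show p + (d+1) = (p+d) + 1 from by omega] at h2
    have hlen : p + d + 1 < l.length := (List.getElem?_eq_some_iff.mp h2).1
    obtain ⟨m, hm⟩ := get?_some_of_lt (l := l) (show p + d < l.length by omega)
    have hadj : v < m := by
      have hc := List.isChain_iff_getElem.mp h (p+d) (by omega)
      rw [List.getElem?_eq_getElem (show p + d < l.length by omega)] at hm
      rw [List.getElem?_eq_getElem hlen] at h2
      injection hm with hm; injection h2 with h2
      rw [hm, h2] at hc
      exact hc
    have := ih p h1 hm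
    omega

private lemma chain'_lt_get? {l : List ℕ} (h : List.Chain' (· < ·) l) {p q u v : ℕ}
    (hpq : p < q) (h1 : l[p]? = some u) (h2 : l[q]? = some v) : u < v := by
  have hpw := List.isChain_iff_pairwise.mp h
  have hq : q < l.length := (List.getElem?_eq_some_iff.mp h2).1
  have hp' : p < l.length := by omega
  have := List.pairwise_iff_get.mp hpw ⟨p, hp'⟩ ⟨q, hq⟩ hpq
  rw [List.getElem?_eq_getElem hp'] at h1; rw [List.getElem?_eq_getElem hq] at h2
  injection h1 with h1; injection h2 with h2
  rw [← h1, ← h2]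
  exact this

private lemma filterMap_range_dc (f : ℕ → Option ℕ) :
    ∀ (M : ℕ), (∀ j j', j' ≤ j → j < M → (f j).isSome → (f j').isSome) →
    ∃ K, K ≤ M ∧ (∀ j, K ≤ j → j < M → f j = none) ∧
      ((List.range M).filterMap f).length = K ∧
      (∀ p, p < K → ((List.range M).filterMap f)[p]? = f p) := by
  intro M
  induction M with
  | zero => exact fun _ => ⟨0, le_refl 0, fun j h1 h2 => by omega, by simp, fun p hp => by omega⟩
  | succ M ih =>
    intro hdc
    obtain ⟨K, hKM, hnone, hlen, hget⟩ := ih (fun j j' hj hjM hs => hdc j j' hj (by omega) hs)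
    have hsplit : List.range (M+1) = List.range M ++ [M] := List.range_succ ..
    cases hfM : f M with
    | none =>
      refine ⟨K, by omega, ?_, ?_, ?_⟩
      · intro j h1 h2
        rcases (show j < M ∨ j = M by omega) with h | h
        · exact hnone j h1 h
        · rw [h]; exact hfM
      · rw [hsplit, List.filterMap_append]
        simp [hfM, hlen]
      · intro p hp
        rw [hsplit, List.filterMap_append]
        simp only [List.filterMap_cons, hfM, List.filterMap_nil, List.append_nil]
        exact hget p hp
    | some v =>
      have hK : K = M := by
        by_contra hne
        have hKlt : K < M := by omega
        have h1 : f K = none := hnone K le_rfl hKlt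
        have h2 : (f K).isSome := hdc M K (by omega) (by omega) (by rw [hfM]; rfl)
        rw [h1] at h2; simp at h2
      subst hK
      refine ⟨K + 1, by omega, fun j h1 h2 => by omega, ?_, ?_⟩
      · rw [hsplit, List.filterMap_append]
        simp only [List.filterMap_cons, hfM, List.filterMap_nil]
        simp [hlen]
      · intro p hp
        rw [hsplit, List.filterMap_append]
        simp only [List.filterMap_cons, hfM, List.filterMap_nil]
        rcases (show p < K ∨ p = K by omega) with h | h
        · rw [List.getElem?_append_left (by rw [hlen]; exact h)]
          exact hget p h
        · subst h
          rw [List.getElem?_append_right (by rw [hlen])]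
          rw [hlen]
          simp [hfM]

private lemma updRow_cons (r0 : List ℕ) (body : Tab) (i : ℕ) (r : List ℕ) :
    updRow (r0 :: body) (i + 1) r = r0 :: updRow body i r := by
  unfold updRow
  by_cases h : i < body.length
  · rw [if_pos (by simp; omega), if_pos h, List.set_cons_succ]
  · rw [if_neg (by simp; omega), if_neg h]
    rfl

private lemma updRow_zero (r0 : List ℕ) (body : Tab) (r : List ℕ) :
    updRow (r0 :: body) 0 r = r :: body := by
  unfold updRow
  rw [if_pos (by simp)]
  rfl

private lemma colList_cons (row0 : List ℕ) (body : Tab) (col v : ℕ)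
    (h : row0[col]? = some v) :
    colList (row0 :: body) col
      = v :: (List.range col).filterMap (fun j => (body[j]?).bind (fun r => r[col - 1 - j]?)) := by
  unfold colList
  rw [List.range_succ_eq_map, List.filterMap_cons]
  have h0 : ((row0 :: body)[0]?).bind (fun r => r[col - 0]?) = some v := by
    simpa using h
  rw [h0]
  dsimp only
  rw [List.filterMap_map]
  congr 1
  refine List.filterMap_congr (fun j hj => ?_)
  simp only [Function.comp, List.getElem?_cons_succ]
  congr 1
  funext r
  congr 1
  omega

private lemma map_length_set (body : Tab) (j : ℕ) (r : List ℕ)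
    (hj : j < body.length)
    (h : r.length = (body.getD j []).length) :
    (body.set j r).map List.length = body.map List.length := by
  apply List.ext_getElem?
  intro n
  rw [List.getElem?_map, List.getElem?_map]
  by_cases hn : j = n
  · subst hn
    rw [get?_set_self' _ _ _ hj, getDL_some_of_lt (d := []) hj]
    simp [h]
  · rw [List.getElem?_set_ne hn]

private def Adj (body : Tab) (col : ℕ) : Prop :=
  ∀ j r p u v, body[j]? = some r → col ≤ j + 1 + p →
    r[p]? = some u → r[p + 1]? = some v → u < v

private lemma adj_of_inc {body : Tab} (h : ∀ r ∈ body, List.Chain' (· < ·) r) (col : ℕ) :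
    Adj body col := fun _ r p u v hj _ h1 h2 =>
  chain'_lt_get? (h r (List.mem_of_getElem? hj)) (Nat.lt_succ_self p) h1 h2

private def ColP (body : Tab) (col x : ℕ) : Prop :=
  ∃ q, q + 2 ≤ col ∧ col ≤ q + 1 + (body.getD q []).length ∧
    (∀ u, (body.getD q [])[col - (q + 1)]? = some u → x ≤ u)

private lemma colGen (R : List ℕ) (c n : ℕ) (hRlen : R.length = n + 1)
    (hRlt : ∀ u ∈ R, u < c) :
    ∀ (m : ℕ) (body : Tab) (col x : ℕ),
      col + m = n → c ≤ x →
      List.Chain' (· > ·) (n :: body.map List.length) →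
      Adj body col →
      ColP body col x →
      ∃ (body' : Tab) (k colf : ℕ), 1 ≤ k ∧
        ∀ row0' : List ℕ, n + 1 ≤ row0'.length →
          (∀ j, j ≤ n → row0'[j]? = R[j]?) →
          InsCol (row0' :: body) col x (row0' :: body') (k, colf) true := by
  intro m
  induction m using Nat.strong_induction_on with
  | _ m ih =>
  intro body col x hm hcx hch hadj hP
  have hcoln : col ≤ n := by omega
  obtain ⟨Rv, hRv⟩ := get?_some_of_lt (l := R) (show col < R.length by omega)
  have hRvx : Rv < x := lt_of_lt_of_le (hRlt Rv (List.mem_of_getElem? hRv)) hcx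
  -- the body part of the column
  set f : ℕ → Option ℕ := fun j => (body[j]?).bind (fun r => r[col - 1 - j]?) with hf
  have hfsome : ∀ j r u, body[j]? = some r → r[col - 1 - j]? = some u → f j = some u := by
    intro j r u h1 h2
    rw [hf]; simp only; rw [h1, Option.bind_some, h2]
  have hfnone1 : ∀ j, body[j]? = none → f j = none := by
    intro j h1
    rw [hf]; simp only; rw [h1]; rfl
  have hfnone2 : ∀ j r, body[j]? = some r → r[col - 1 - j]? = none → f j = none := by
    intro j r h1 h2
    rw [hf]; simp only; rw [h1, Option.bind_some, h2]
  have hfelim : ∀ j u, f j = some u →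
      ∃ r, body[j]? = some r ∧ r[col - 1 - j]? = some u := by
    intro j u hj
    cases hbj : body[j]? with
    | none => rw [hfnone1 j hbj] at hj; exact absurd hj (by simp)
    | some r =>
      cases hrj : r[col - 1 - j]? with
      | none => rw [hfnone2 j r hbj hrj] at hj; exact absurd hj (by simp)
      | some u' =>
        rw [hfsome j r u' hbj hrj] at hj
        injection hj with hj
        subst hj
        exact ⟨r, rfl, hrj⟩
  -- auxiliary: length bounds along the chain
  have hlenrow : ∀ j r, body[j]? = some r → r.length + (j + 1) ≤ n := by
    intro j r hj
    have h1 : (n :: body.map List.length)[0]? = some n := rfl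
    have h2 : (n :: body.map List.length)[0 + (j + 1)]? = some r.length := by
      simp only [Nat.zero_add, List.getElem?_cons_succ, List.getElem?_map, hj, Option.map_some]
    have := chain'_gt_get? hch (j + 1) 0 h1 h2
    omega
  have hlen2 : ∀ j j' (r r' : List ℕ), j' ≤ j → body[j]? = some r → body[j']? = some r' →
      r.length + (j - j') ≤ r'.length := by
    intro j j' r r' hjj hj hj'
    have h1 : (n :: body.map List.length)[j' + 1]? = some r'.length := by
      simp only [List.getElem?_cons_succ, List.getElem?_map, hj', Option.map_some]
    have h2 : (n :: body.map List.length)[(j' + 1) + (j - j')]? = some r.length := by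
      rw [show (j' + 1) + (j - j') = j + 1 by omega]
      simp only [List.getElem?_cons_succ, List.getElem?_map, hj, Option.map_some]
    have := chain'_gt_get? hch (j - j') (j' + 1) h1 h2
    omega
  have hdc : ∀ j j', j' ≤ j → j < col → (f j).isSome → (f j').isSome := by
    intro j j' hjj hjcol hs
    obtain ⟨u, hu⟩ := Option.isSome_iff_exists.mp hs
    obtain ⟨r, hbj, hrj⟩ := hfelim j u hu
    have hrlen : col - 1 - j < r.length := (List.getElem?_eq_some_iff.mp hrj).1
    have hjlen : j < body.length := (List.getElem?_eq_some_iff.mp hbj).1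
    obtain ⟨r', hbj'⟩ := get?_some_of_lt (l := body) (show j' < body.length by omega)
    have hlen' : r.length + (j - j') ≤ r'.length := hlen2 j j' r r' hjj hbj hbj'
    obtain ⟨u', hu'⟩ := get?_some_of_lt (l := r') (show col - 1 - j' < r'.length by omega)
    rw [hfsome j' r' u' hbj' hu']
    rfl
  obtain ⟨K, hKM, hnone, hlenK, hgetK⟩ := filterMap_range_dc f col hdc
  have hCLgen : ∀ row0' : List ℕ, n + 1 ≤ row0'.length →
      (∀ j, j ≤ n → row0'[j]? = R[j]?) →
      colList (row0' :: body) col = Rv :: (List.range col).filterMap f := by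
    intro row0' h1 h2
    have : row0'[col]? = some Rv := by rw [h2 col hcoln]; exact hRv
    exact colList_cons row0' body col Rv this
  cases dB : ((List.range col).filterMap f).dropWhile (fun y => decide (y < x)) with
  | nil =>
    -- terminal append into the box (K+1, col)
    obtain ⟨q, hq2, hqlen, hqent⟩ := hP
    have hqlt : q < body.length := by
      by_contra hq
      rw [getD_eq_nil_of_le (by omega)] at hqlen
      simp at hqlen
      omega
    obtain ⟨rq, hrq⟩ := get?_some_of_lt hqlt
    have hrqD : body.getD q [] = rq := getD_eq_of_get? hrq
    have hfq : rq[col - 1 - q]? = none := by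
      cases hrqe : rq[col - 1 - q]? with
      | none => rfl
      | some u =>
        exfalso
        have hmem : u ∈ (List.range col).filterMap f :=
          List.mem_filterMap.mpr ⟨q, List.mem_range.mpr (by omega), hfsome q rq u hrq hrqe⟩
        have hall := List.dropWhile_eq_nil_iff.mp dB u hmem
        have hux : x ≤ u := hqent u (by rw [hrqD, show col - (q+1) = col - 1 - q by omega]; exact hrqe)
        simp at hall
        omega
    have hrqlen : rq.length = col - 1 - q := by
      have h1 : rq.length ≤ col - 1 - q := by
        by_contra hh
        obtain ⟨u, hu⟩ := get?_some_of_lt (l := rq) (show col - 1 - q < rq.length by omega)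
        rw [hu] at hfq; exact absurd hfq (by simp)
      have h2 : col ≤ q + 1 + rq.length := by rw [hrqD] at hqlen; exact hqlen
      omega
    have hKq : K ≤ q := by
      by_contra hh
      have hqK : q < K := by omega
      have hcbq := hgetK q hqK
      rw [hfnone2 q rq hrq hfq] at hcbq
      have : ((List.range col).filterMap f)[q]? ≠ none := by
        rw [List.getElem?_eq_getElem (show q < ((List.range col).filterMap f).length by omega)]
        simp
      exact this hcbq
    obtain ⟨rK, hrK⟩ := get?_some_of_lt (l := body) (show K < body.length by omega)
    have hrKD : body.getD K [] = rK := getD_eq_of_get? hrK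
    have hrKlen : rK.length = col - 1 - K := by
      have hfK : f K = none := hnone K le_rfl (by omega)
      have hle : rK.length ≤ col - 1 - K := by
        by_contra hh
        obtain ⟨u, hu⟩ := get?_some_of_lt (l := rK) (show col - 1 - K < rK.length by omega)
        rw [hfsome K rK u hrK hu] at hfK
        exact absurd hfK (by simp)
      have hge : rq.length + (q - K) ≤ rK.length := hlen2 q K rq rK hKq hrq hrK
      omega
    refine ⟨updRow body K (rK ++ [x]), K + 1, col, by omega, ?_⟩
    intro row0' h1 h2
    have hCL := hCLgen row0' h1 h2
    have hgd : (row0' :: body).getD (K + 1) [] = rK := by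
      rw [List.getD_cons_succ, hrKD]
    have e : updRow (row0' :: body) (K + 1) ((row0' :: body).getD (K + 1) [] ++ [x])
        = row0' :: updRow body K (rK ++ [x]) := by
      rw [hgd, updRow_cons]
    rw [← e]
    refine InsCol.append _ col x (K + 1) ?_ ?_ ?_ (by omega)
    · rw [hCL, List.dropWhile_cons]
      rw [if_pos (by simpa using hRvx)]
      exact dB
    · rw [hCL]
      simp [hlenK]
    · rw [hgd, hrKlen]
      omega
  | cons e restd =>
    have hxe : x ≤ e := by
      have := dropWhile_head_false (p := fun y => decide (y < x)) dB
      simp at this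
      omega
    have hcoln' : col < n := by
      rcases lt_or_eq_of_le hcoln with h | h
      · exact h
      · exfalso
        have hCBnil : (List.range col).filterMap f = [] := by
          refine List.filterMap_eq_nil_iff.mpr (fun j hj => ?_)
          rw [List.mem_range] at hj
          cases hbj : body[j]? with
          | none => exact hfnone1 j hbj
          | some r =>
            have := hlenrow j r hbj
            exact hfnone2 j r hbj (List.getElem?_eq_none_iff.mpr (by omega))
        rw [hCBnil] at dB
        exact absurd dB (by simp)
    have hm1 : 1 ≤ m := by omega
    have hsplitCB : (List.range col).filterMap f
        = ((List.range col).filterMap f).takeWhile (fun y => decide (y < x)) ++ (e :: restd) := by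
      rw [← dB, List.takeWhile_append_dropWhile]
    set t : ℕ := (((List.range col).filterMap f).takeWhile (fun y => decide (y < x))).length with ht
    have htK : t < K := by
      have h0 : ((List.range col).filterMap f).length = t + (e :: restd).length := by
        conv_lhs => rw [hsplitCB]
        rw [List.length_append]
      rw [hlenK] at h0
      simp at h0
      omega
    have hCBt : ((List.range col).filterMap f)[t]? = some e := by
      conv_lhs => rw [hsplitCB]
      rw [List.getElem?_append_right (le_of_eq ht.symm)]
      rw [← ht, Nat.sub_self]
      rfl
    have hft : f t = some e := (hgetK t htK).symm.trans hCBt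
    obtain ⟨rt, hrt, hrte⟩ := hfelim t e hft
    have hrtD : body.getD t [] = rt := getD_eq_of_get? hrt
    have htcol : t + 1 ≤ col := by omega
    have hrtlen : col - 1 - t < rt.length := (List.getElem?_eq_some_iff.mp hrte).1
    have hrtlt : t < body.length := (List.getElem?_eq_some_iff.mp hrt).1
    have hnext : ∀ u, rt[col - t]? = some u → e < u := by
      intro u hu
      refine hadj t rt (col - 1 - t) e u hrt (by omega) hrte ?_
      rw [show col - 1 - t + 1 = col - t by omega]
      exact hu
    by_cases hex : e = x
    · -- equal branch
      subst hex
      have hP' : ColP body (col + 1) (e + 1) := by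
        refine ⟨t, by omega, ?_, ?_⟩
        · rw [hrtD]; omega
        · intro u hu
          rw [hrtD, show col + 1 - (t + 1) = col - t by omega] at hu
          have := hnext u hu
          omega
      have hadj' : Adj body (col + 1) := by
        intro j r p u v hj hle hg1 hg2
        exact hadj j r p u v hj (by omega) hg1 hg2
      obtain ⟨body', k, colf, hk, hins⟩ := ih (m - 1) (by omega) body (col + 1) (e + 1)
        (by omega) (by omega) hch hadj' hP'
      refine ⟨body', k, colf, hk, ?_⟩
      intro row0' h1 h2
      refine InsCol.equal _ col e restd _ _ _ ?_ (hins row0' h1 h2)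
      rw [hCLgen row0' h1 h2, List.dropWhile_cons, if_pos (by simpa using hRvx)]
      exact dB
    · -- bump branch
      have hxe' : x < e := by omega
      have hch₂ : List.Chain' (· > ·)
          (n :: (body.set t (rt.set (col - 1 - t) x)).map List.length) := by
        rw [map_length_set body t _ hrtlt (by rw [List.length_set, hrtD])]
        exact hch
      have hgd₂ : (body.set t (rt.set (col - 1 - t) x)).getD t [] = rt.set (col - 1 - t) x :=
        getD_eq_of_get? (get?_set_self' _ _ _ hrtlt)
      have hadj₂ : Adj (body.set t (rt.set (col - 1 - t) x)) (col + 1) := by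
        intro j r p u v hj hle hg1 hg2
        by_cases hjt : t = j
        · subst hjt
          rw [get?_set_self' _ _ _ hrtlt] at hj
          injection hj with hj
          subst hj
          rw [List.getElem?_set_ne (by omega)] at hg1
          rw [List.getElem?_set_ne (by omega)] at hg2
          exact hadj t rt p u v hrt (by omega) hg1 hg2
        · rw [List.getElem?_set_ne hjt] at hj
          exact hadj j r p u v hj (by omega) hg1 hg2
      have hP₂ : ColP (body.set t (rt.set (col - 1 - t) x)) (col + 1) e := by
        refine ⟨t, by omega, ?_, ?_⟩
        · rw [hgd₂, List.length_set]
          omega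
        · intro u hu
          rw [hgd₂, show col + 1 - (t + 1) = col - t by omega,
            List.getElem?_set_ne (by omega)] at hu
          exact le_of_lt (hnext u hu)
      obtain ⟨body', k, colf, hk, hins⟩ := ih (m - 1) (by omega)
        (body.set t (rt.set (col - 1 - t) x)) (col + 1) e
        (by omega) (by omega) hch₂ hadj₂ hP₂
      refine ⟨body', k, colf, hk, ?_⟩
      intro row0' h1 h2
      have hCL := hCLgen row0' h1 h2
      refine InsCol.bump (row0' :: body) col x e (t + 1) restd _ _ _ ?_ hxe' ?_ ?_
      · rw [hCL, List.dropWhile_cons, if_pos (by simpa using hRvx)]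
        exact dB
      · rw [hCL, List.takeWhile_cons, if_pos (by simpa using hRvx)]
        simp [ht]
      · have hgd : (row0' :: body).getD (t + 1) [] = rt := by
          rw [List.getD_cons_succ, hrtD]
        have heq : (row0' :: body).set (t + 1)
              (((row0' :: body).getD (t + 1) []).set (col - (t + 1)) x)
            = row0' :: body.set t (rt.set (col - 1 - t) x) := by
          rw [hgd, List.set_cons_succ, show col - (t + 1) = col - 1 - t by omega]
        rw [heq]
        exact hins row0' h1 h2

private lemma rowGen (R : List ℕ) (c n : ℕ) (hRlen : R.length = n + 1)
    (hRlt : ∀ u ∈ R, u < c) :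
    ∀ (m : ℕ) (body : Tab) (i v : ℕ),
      i + m = body.length + 1 → 1 ≤ i → c ≤ v →
      List.Chain' (· > ·) (n :: body.map List.length) →
      (∀ r ∈ body, List.Chain' (· < ·) r) →
      ∃ (body' : Tab) (pos : ℕ × ℕ) (pr : Bool), 1 ≤ pos.1 ∧
        ∀ row0' : List ℕ, n + 1 ≤ row0'.length →
          (∀ j, j ≤ n → row0'[j]? = R[j]?) →
          InsRow (row0' :: body) i v (row0' :: body') pos pr := by
  intro m
  induction m using Nat.strong_induction_on with
  | _ m ih =>
  intro body i v hm hi hcv hch hinc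
  obtain ⟨i0, rfl⟩ : ∃ i0, i = i0 + 1 := ⟨i - 1, by omega⟩
  set r : List ℕ := body.getD i0 [] with hr
  have hgdrow : ∀ row0' : List ℕ, (row0' :: body).getD (i0 + 1) [] = r := by
    intro row0'
    rw [List.getD_cons_succ]
  cases dW : r.dropWhile (fun y => decide (y < v)) with
  | nil =>
    refine ⟨updRow body i0 (r ++ [v]), (i0 + 1, (i0 + 1) + r.length), false, by omega, ?_⟩
    intro row0' h1 h2
    have := InsRow.append (row0' :: body) (i0 + 1) v r (hgdrow row0').symm dW
    rwa [updRow_cons] at this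
  | cons b' rest =>
    have hvb : ¬ (b' < v) := by
      have := dropWhile_head_false (p := fun y => decide (y < v)) dW
      simpa using this
    have hrne : r ≠ [] := by
      intro h
      rw [h] at dW
      exact absurd dW (by simp)
    have hi0len : i0 < body.length := by
      by_contra hh
      exact hrne (by rw [hr]; exact getD_eq_nil_of_le (by omega))
    have hrget : body[i0]? = some r := by
      rw [hr]; exact getDL_some_of_lt hi0len
    have hm1 : 1 ≤ m := by omega
    have hchain_r : List.Chain' (· < ·) r := hinc r (List.mem_of_getElem? hrget)
    have hsplit : r.takeWhile (fun y => decide (y < v)) ++ (b' :: rest) = r := by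
      rw [← dW, List.takeWhile_append_dropWhile]
    have hrlen_n : r.length + (i0 + 1) ≤ n := by
      have h1 : (n :: body.map List.length)[0]? = some n := rfl
      have h2 : (n :: body.map List.length)[0 + (i0 + 1)]? = some r.length := by
        simp only [Nat.zero_add, List.getElem?_cons_succ, List.getElem?_map, hrget, Option.map_some]
      have := chain'_gt_get? hch (i0 + 1) 0 h1 h2
      omega
    have hpw : List.Pairwise (· < ·) (r.takeWhile (fun y => decide (y < v)) ++ (b' :: rest)) := by
      rw [hsplit]
      exact List.isChain_iff_pairwise.mp hchain_r
    have hpw2 := (List.pairwise_append.mp hpw).2.1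
    have hbrest : ∀ y ∈ rest, b' < y := (List.pairwise_cons.mp hpw2).1
    have hrestpw : List.Pairwise (· < ·) rest := (List.pairwise_cons.mp hpw2).2
    by_cases hbv : b' = v
    · -- equal branch
      subst hbv
      obtain ⟨body', pos, pr, hpos, hins⟩ := ih (m - 1) (by omega) body (i0 + 2) (b' + 1)
        (by omega) (by omega) (by omega) hch hinc
      refine ⟨body', pos, pr, hpos, ?_⟩
      intro row0' h1 h2
      refine InsRow.equal _ (i0 + 1) b' rest _ pos pr ?_ (hins row0' h1 h2)
      rw [hgdrow row0']
      exact dW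
    · have hvb' : v < b' := by omega
      cases tW : r.takeWhile (fun y => decide (y < v)) with
      | cons p0 pre' =>
        -- bumpRow
        set pre : List ℕ := p0 :: pre' with hpre
        have hsplit' : pre ++ (b' :: rest) = r := by rw [← tW]; exact hsplit
        have hpwpre : List.Pairwise (· < ·) pre := by
          rw [← tW]; exact (List.pairwise_append.mp hpw).1
        have hprelt : ∀ y ∈ pre, y < v := by
          intro y hy
          have : y ∈ r.takeWhile (fun y => decide (y < v)) := by rw [tW]; exact hy
          simpa using List.mem_takeWhile_imp this
        have hlen_eq : (pre ++ v :: rest).length = (body.getD i0 []).length := by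
          rw [← hr, ← hsplit']
          simp
        have hch₂ : List.Chain' (· > ·) (n :: (body.set i0 (pre ++ v :: rest)).map List.length) := by
          rw [map_length_set body i0 _ hi0len hlen_eq]
          exact hch
        have hinc₂ : ∀ r' ∈ body.set i0 (pre ++ v :: rest), List.Chain' (· < ·) r' := by
          intro r' hr'
          rcases List.mem_or_eq_of_mem_set hr' with h | h
          · exact hinc r' h
          · subst h
            refine List.isChain_iff_pairwise.mpr ?_
            refine List.pairwise_append.mpr ⟨hpwpre, ?_, ?_⟩
            · refine List.pairwise_cons.mpr ⟨?_, hrestpw⟩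
              intro y hy
              exact lt_trans hvb' (hbrest y hy)
            · intro y hy z hz
              have hyv : y < v := hprelt y hy
              rcases List.mem_cons.mp hz with h | h
              · omega
              · have := hbrest z h
                omega
        obtain ⟨body', pos, pr, hpos, hins⟩ := ih (m - 1) (by omega)
          (body.set i0 (pre ++ v :: rest)) (i0 + 2) b'
          (by rw [List.length_set]; omega) (by omega) (by omega) hch₂ hinc₂
        refine ⟨body', pos, pr, hpos, ?_⟩
        intro row0' h1 h2
        refine InsRow.bumpRow (row0' :: body) (i0 + 1) v b' pre rest _ pos pr ?_ ?_ hvb'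
          (by rw [hpre]; exact List.cons_ne_nil _ _) ?_
        · rw [hgdrow row0', tW]
        · rw [hgdrow row0']; exact dW
        · rw [List.set_cons_succ]
          exact hins row0' h1 h2
      | nil =>
        -- r = b' :: rest ; column insertion
        have hrbr : r = b' :: rest := by rw [← hsplit, tW]; rfl
        have hi0n : i0 + 2 ≤ n := by
          rw [hrbr] at hrlen_n
          simp at hrlen_n
          omega
        by_cases hpar : v % 2 = b' % 2
        · -- bumpDiag
          have hlen_eq : (v :: rest).length = (body.getD i0 []).length := by
            rw [← hr, hrbr]; rfl
          have hch₂ : List.Chain' (· > ·) (n :: (body.set i0 (v :: rest)).map List.length) := by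
            rw [map_length_set body i0 _ hi0len hlen_eq]
            exact hch
          have hinc₂ : ∀ r' ∈ body.set i0 (v :: rest), List.Chain' (· < ·) r' := by
            intro r' hr'
            rcases List.mem_or_eq_of_mem_set hr' with h | h
            · exact hinc r' h
            · subst h
              refine List.isChain_iff_pairwise.mpr ?_
              refine List.pairwise_cons.mpr ⟨?_, hrestpw⟩
              intro y hy
              exact lt_trans hvb' (hbrest y hy)
          have hgd₂ : (body.set i0 (v :: rest)).getD i0 [] = v :: rest :=
            getD_eq_of_get? (get?_set_self' _ _ _ hi0len)
          have hP : ColP (body.set i0 (v :: rest)) (i0 + 2) b' := by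
            refine ⟨i0, by omega, ?_, ?_⟩
            · rw [hgd₂]; simp; omega
            · intro u hu
              rw [hgd₂, show i0 + 2 - (i0 + 1) = 1 by omega] at hu
              have : u ∈ rest := List.mem_of_getElem? hu
              exact le_of_lt (hbrest u this)
          obtain ⟨body', k, colf, hk, hins⟩ := colGen R c n hRlen hRlt (n - (i0 + 2))
            (body.set i0 (v :: rest)) (i0 + 2) b' (by omega) (by omega) hch₂
            (adj_of_inc hinc₂ _) hP
          refine ⟨body', (k, colf), true, hk, ?_⟩
          intro row0' h1 h2
          refine InsRow.bumpDiag (row0' :: body) (i0 + 1) v b' rest _ _ _ ?_ ?_ hvb' hpar ?_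
          · rw [hgdrow row0', tW]
          · rw [hgdrow row0']; exact dW
          · rw [List.set_cons_succ]
            exact hins row0' h1 h2
        · -- parity
          have hP : ColP body (i0 + 2) (v + 2) := by
            refine ⟨i0, by omega, ?_, ?_⟩
            · rw [← hr, hrbr]; simp; omega
            · intro u hu
              rw [← hr, hrbr, show i0 + 2 - (i0 + 1) = 1 by omega] at hu
              have hmem : u ∈ rest := List.mem_of_getElem? hu
              have h1 := hbrest u hmem
              have hb2 : v + 1 ≤ b' := by omega
              omega
          obtain ⟨body', k, colf, hk, hins⟩ := colGen R c n hRlen hRlt (n - (i0 + 2))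
            body (i0 + 2) (v + 2) (by omega) (by omega) hch
            (adj_of_inc hinc _) hP
          refine ⟨body', (k, colf), true, hk, ?_⟩
          intro row0' h1 h2
          refine InsRow.parity (row0' :: body) (i0 + 1) v b' rest _ _ _ ?_ ?_ hvb' hpar ?_
          · rw [hgdrow row0', tW]
          · rw [hgdrow row0']; exact dW
          · exact hins row0' h1 h2

end AuxFRS

/-- If every entry of the first row of the increasing shifted tableau `T` is smaller
than `a`, and `a < b < c` with `row(T)·acb` an FPF-involution word, then
`T ← acb = T ← cab`; both append `a` and `b` to the end of the first row (the letter
`c` being inserted into the second row). -/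
theorem first_row_small_acb_eq_cab (T : Tab) (a b c : ℕ)
    (hne : T ≠ []) (hT : IsIncreasingTab T)
    (hsmall : ∀ y ∈ T.getD 0 [], y < a) (hab : a < b) (hbc : b < c)
    (h : IsFPFWord (rowWord T ++ [a, c, b])) :
    ∃ U : Tab, InsWord T [a, c, b] U ∧ InsWord T [c, a, b] U ∧
      U.getD 0 [] = T.getD 0 [] ++ [a, b] := by
  classical
  obtain ⟨r0, body, rfl⟩ : ∃ r0 body, T = r0 :: body := by
    cases T with
    | nil => exact absurd rfl hne
    | cons r0 body => exact ⟨r0, body, rfl⟩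
  clear hne h
  obtain ⟨hTne, hTch, hTinc, -, -⟩ := hT
  have hsmall' : ∀ y ∈ r0, y < a := by
    intro y hy
    exact hsmall y (by rwa [List.getD_cons_zero])
  have hr0ne : r0 ≠ [] := hTne r0 (List.mem_cons_self)
  set n : ℕ := r0.length with hn
  have hn1 : 1 ≤ n := by
    rw [hn]
    cases r0 with
    | nil => exact absurd rfl hr0ne
    | cons _ _ => simp
  have hRlen : (r0 ++ [a]).length = n + 1 := by simp [hn]
  have hRlt : ∀ u ∈ r0 ++ [a], u < c := by
    intro u hu
    rcases List.mem_append.mp hu with h | h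
    · have := hsmall' u h; omega
    · simp at h; omega
  have hch : List.Chain' (· > ·) (n :: body.map List.length) := by
    have h1 : List.Chain' (· > ·) ((r0 :: body).map List.length) :=
      (List.isChain_map _).mpr hTch
    simpa using h1
  have hinc : ∀ r ∈ body, List.Chain' (· < ·) r :=
    fun r h => hTinc r (List.mem_cons_of_mem _ h)
  obtain ⟨body', pos, pr, hpos, hins⟩ := rowGen (r0 ++ [a]) c n hRlen hRlt
    body.length body 1 c (by omega) le_rfl le_rfl hch hinc
  have hinsA : InsRow ((r0 ++ [a]) :: body) 1 c ((r0 ++ [a]) :: body') pos pr :=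
    hins (r0 ++ [a]) (by simp [hn]) (fun j _ => rfl)
  have hinsB : InsRow (((r0 ++ [a]) ++ [b]) :: body) 1 c (((r0 ++ [a]) ++ [b]) :: body') pos pr :=
    hins ((r0 ++ [a]) ++ [b]) (by simp [hn])
      (fun j hj => List.getElem?_append_left (by rw [hRlen]; omega))
  refine ⟨((r0 ++ [a]) ++ [b]) :: body', ?_, ?_, ?_⟩
  · -- T ← acb
    have step1 : InsRow (r0 :: body) 0 a ((r0 ++ [a]) :: body) (0, 0 + r0.length) false := by
      have h2 : r0.dropWhile (fun y => decide (y < a)) = [] :=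
        List.dropWhile_eq_nil_iff.mpr (fun x hx => by simpa using hsmall' x hx)
      have := InsRow.append (r0 :: body) 0 a r0 (by rw [List.getD_cons_zero]) h2
      rwa [updRow_zero] at this
    have step2 : InsRow ((r0 ++ [a]) :: body) 0 c (((r0 ++ [a]) ++ [c]) :: body)
        (0, 0 + (r0 ++ [a]).length) false := by
      have h2 : (r0 ++ [a]).dropWhile (fun y => decide (y < c)) = [] :=
        List.dropWhile_eq_nil_iff.mpr (fun x hx => by simpa using hRlt x hx)
      have := InsRow.append ((r0 ++ [a]) :: body) 0 c (r0 ++ [a]) (by rw [List.getD_cons_zero]) h2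
      rwa [updRow_zero] at this
    have hltb : ∀ x ∈ r0 ++ [a], decide (x < b) = true := by
      intro x hx
      rcases List.mem_append.mp hx with h | h
      · have := hsmall' x h; simp; omega
      · simp at h; simp; omega
    have step3 : InsRow (((r0 ++ [a]) ++ [c]) :: body) 0 b (((r0 ++ [a]) ++ [b]) :: body') pos pr := by
      refine InsRow.bumpRow _ 0 b c (r0 ++ [a]) [] _ pos pr ?_ ?_ hbc (by simp) ?_
      · rw [List.getD_cons_zero, takeWhile_app_all _ _ _ hltb]
        rw [List.takeWhile_cons, if_neg (by simp; omega)]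
        simp
      · rw [List.getD_cons_zero, dropWhile_app_all _ _ _ hltb]
        rw [List.dropWhile_cons, if_neg (by simp; omega)]
      · rw [List.set_cons_zero]
        exact hinsB
    exact InsWord.cons _ _ _ a _ _ _ step1
      (InsWord.cons _ _ _ c _ _ _ step2
        (InsWord.cons _ _ _ b _ _ _ step3 (InsWord.nil _)))
  · -- T ← cab
    have hltc : ∀ x ∈ r0, decide (x < c) = true := by
      intro x hx
      have := hsmall' x hx; simp; omega
    have step1 : InsRow (r0 :: body) 0 c ((r0 ++ [c]) :: body) (0, 0 + r0.length) false := by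
      have h2 : r0.dropWhile (fun y => decide (y < c)) = [] :=
        List.dropWhile_eq_nil_iff.mpr hltc
      have := InsRow.append (r0 :: body) 0 c r0 (by rw [List.getD_cons_zero]) h2
      rwa [updRow_zero] at this
    have hlta : ∀ x ∈ r0, decide (x < a) = true := by
      intro x hx
      have := hsmall' x hx; simp; omega
    have step2 : InsRow ((r0 ++ [c]) :: body) 0 a ((r0 ++ [a]) :: body') pos pr := by
      refine InsRow.bumpRow _ 0 a c r0 [] _ pos pr ?_ ?_ (by omega) hr0ne ?_
      · rw [List.getD_cons_zero, takeWhile_app_all _ _ _ hlta]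
        rw [List.takeWhile_cons, if_neg (by simp; omega)]
        simp
      · rw [List.getD_cons_zero, dropWhile_app_all _ _ _ hlta]
        rw [List.dropWhile_cons, if_neg (by simp; omega)]
      · rw [List.set_cons_zero]
        exact hinsA
    have step3 : InsRow ((r0 ++ [a]) :: body') 0 b (((r0 ++ [a]) ++ [b]) :: body')
        (0, 0 + (r0 ++ [a]).length) false := by
      have h2 : (r0 ++ [a]).dropWhile (fun y => decide (y < b)) = [] := by
        refine List.dropWhile_eq_nil_iff.mpr ?_
        intro x hx
        rcases List.mem_append.mp hx with h | h
        · have := hsmall' x h; simp; omega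
        · simp at h; simp; omega
      have := InsRow.append ((r0 ++ [a]) :: body') 0 b (r0 ++ [a]) (by rw [List.getD_cons_zero]) h2
      rwa [updRow_zero] at this
    exact InsWord.cons _ _ _ c _ _ _ step1
      (InsWord.cons _ _ _ a _ _ _ step2
        (InsWord.cons _ _ _ b _ _ _ step3 (InsWord.nil _)))
  · rw [List.getD_cons_zero, List.getD_cons_zero]
    simp
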